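/- As R → ∞: if π_θ = π* then Λ̃(R) → +∞ almost surely, while if π_θ ≠ π* then Λ̃(R) → 0 almost surely. -/

import Mathlib

open MeasureTheory ProbabilityTheory Filter Finset

/-- Number of times category `k` occurs among the first `R` samples. -/
def sigCount {Ω : Type*} {K : ℕ} (X : ℕ → Ω → Fin K) (k : Fin K) (R : ℕ) (x : Ω) : ℕ :=
  ((Finset.range R).filter (fun τ => X τ x = k)).card

namespace ULRAux

open Real

section Det


lemma exp_le_add_exp_sq (u : ℝ) : exp u ≤ u + exp (u ^ 2) := by
  rcases le_or_gt u 1 with h | h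
  · have h1 : exp u ≤ 1 + u + u ^ 2 := by
      rcases le_or_gt (|u|) 1 with h2 | h2
      · have hb := Real.exp_bound h2 (n := 2) (by norm_num)
        have hs : ∑ i ∈ range 2, u ^ i / (i.factorial : ℝ) = 1 + u := by
          simp [Finset.sum_range_succ]
        rw [hs] at hb
        norm_num [Nat.factorial] at hb
        have h3 : exp u - (1 + u) ≤ |exp u - (1 + u)| := le_abs_self _
        nlinarith [sq_abs u, sq_nonneg u]
      · have hu : u < -1 := by
          rcases abs_cases u with ⟨he, hp⟩ | ⟨he, hp⟩ <;> linarith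
        have : exp u < 1 := exp_lt_one_iff.mpr (by linarith)
        nlinarith
    have h2 : (1:ℝ) + u ^ 2 ≤ exp (u ^ 2) := by
      have := Real.add_one_le_exp (u ^ 2); linarith
    linarith
  · have : exp u ≤ exp (u ^ 2) := exp_le_exp.mpr (by nlinarith)
    linarith [this, h.le]

lemma bernoulli_mgf_bound {p : ℝ} (h0 : 0 ≤ p) (h1 : p ≤ 1) (s : ℝ) :
    p * exp (s * (1 - p)) + (1 - p) * exp (-(s * p)) ≤ exp (s ^ 2) := by
  have e1 := exp_le_add_exp_sq (s * (1 - p))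
  have e2 := exp_le_add_exp_sq (-(s * p))
  have b1 : exp ((s * (1 - p)) ^ 2) ≤ exp (s ^ 2) := by
    apply exp_le_exp.mpr; nlinarith [sq_nonneg s, sq_nonneg (s*p), sq_nonneg (s*(1-p))]
  have b2 : exp ((-(s * p)) ^ 2) ≤ exp (s ^ 2) := by
    apply exp_le_exp.mpr; nlinarith [sq_nonneg s, sq_nonneg (s*p)]
  have q0 : 0 ≤ 1 - p := by linarith
  have m1 : p * exp (s * (1 - p)) ≤ p * (s * (1 - p) + exp (s ^ 2)) :=
    mul_le_mul_of_nonneg_left (by linarith) h0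
  have m2 : (1 - p) * exp (-(s * p)) ≤ (1 - p) * (-(s * p) + exp (s ^ 2)) :=
    mul_le_mul_of_nonneg_left (by linarith) q0
  nlinarith

lemma binom_aux (a b : ℕ) :
    (a + b).factorial * (a ^ a * b ^ b) ≤ (a + b) ^ (a + b) * (a.factorial * b.factorial) := by
  have hch : (a + b).choose a * a.factorial * b.factorial = (a + b).factorial := by
    have h := Nat.add_choose_mul_factorial_mul_factorial a b
    have hsymm : (a + b).choose a = (a + b).choose b := by
      have := Nat.choose_symm (n := a + b) (k := b) (Nat.le_add_left b a)
      simpa using this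
    rw [hsymm]
    exact h
  have key : (a + b).choose a * (a ^ a * b ^ b) ≤ (a + b) ^ (a + b) := by
    calc (a + b).choose a * (a ^ a * b ^ b)
        = a ^ a * b ^ ((a + b) - a) * (a + b).choose a := by
          rw [Nat.add_sub_cancel_left]; ring
      _ ≤ ∑ i ∈ range ((a + b) + 1), a ^ i * b ^ ((a + b) - i) * (a + b).choose i :=
          Finset.single_le_sum (f := fun i => a ^ i * b ^ ((a + b) - i) * (a + b).choose i)
            (fun i _ => Nat.zero_le _) (by simp [Nat.lt_succ_iff])
      _ = (a + b) ^ (a + b) := (add_pow a b (a + b)).symm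
  calc (a + b).factorial * (a ^ a * b ^ b)
      = ((a + b).choose a * (a ^ a * b ^ b)) * (a.factorial * b.factorial) := by
        rw [← hch]; ring
    _ ≤ (a + b) ^ (a + b) * (a.factorial * b.factorial) :=
        Nat.mul_le_mul_right _ key

lemma factorial_sum_mul_prod_pow_le {ι : Type*} (s : Finset ι) (r : ι → ℕ) :
    (∑ i ∈ s, r i).factorial * ∏ i ∈ s, (r i) ^ (r i) ≤
      (∑ i ∈ s, r i) ^ (∑ i ∈ s, r i) * ∏ i ∈ s, (r i).factorial := by
  classical
  induction s using Finset.induction_on with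
  | empty => simp
  | insert _ _ hnotmem ih =>
    rename_i a s
    rw [Finset.sum_insert hnotmem, Finset.prod_insert hnotmem, Finset.prod_insert hnotmem]
    set S := ∑ i ∈ s, r i with hS
    have hSS : 0 < S ^ S := by
      rcases Nat.eq_zero_or_pos S with h | h
      · simp [h]
      · exact pow_pos h S
    apply Nat.le_of_mul_le_mul_right _ hSS
    calc ((r a + S).factorial * (r a ^ r a * ∏ i ∈ s, r i ^ r i)) * S ^ S
        = ((r a + S).factorial * (r a ^ r a * S ^ S)) * ∏ i ∈ s, r i ^ r i := by ring
      _ ≤ ((r a + S) ^ (r a + S) * ((r a).factorial * S.factorial)) * ∏ i ∈ s, r i ^ r i :=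
          Nat.mul_le_mul_right _ (binom_aux (r a) S)
      _ = ((r a + S) ^ (r a + S) * (r a).factorial) * (S.factorial * ∏ i ∈ s, r i ^ r i) := by
          ring
      _ ≤ ((r a + S) ^ (r a + S) * (r a).factorial) * (S ^ S * ∏ i ∈ s, (r i).factorial) :=
          Nat.mul_le_mul_left _ ih
      _ = ((r a + S) ^ (r a + S) * ((r a).factorial * ∏ i ∈ s, (r i).factorial)) * S ^ S := by
          ring

lemma fact_add_le (R J : ℕ) : (R + J).factorial ≤ (R + 1) ^ J * J.factorial * R.factorial := by
  induction J with
  | zero => simp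
  | succ J ih =>
    have h1 : (R + (J + 1)).factorial = (R + J + 1) * (R + J).factorial := by
      rw [show R + (J + 1) = (R + J) + 1 by ring, Nat.factorial_succ]
    have h2 : R + J + 1 ≤ (R + 1) * (J + 1) := by nlinarith
    calc (R + (J + 1)).factorial = (R + J + 1) * (R + J).factorial := h1
      _ ≤ ((R + 1) * (J + 1)) * ((R + 1) ^ J * J.factorial * R.factorial) :=
          Nat.mul_le_mul h2 ih
      _ = (R + 1) ^ (J + 1) * (J + 1).factorial * R.factorial := by
          rw [pow_succ, Nat.factorial_succ]; ring

lemma le_fact_add (R J : ℕ) : R ^ J * R.factorial ≤ (R + J).factorial := by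
  induction J with
  | zero => simp
  | succ J ih =>
    calc R ^ (J + 1) * R.factorial = R * (R ^ J * R.factorial) := by rw [pow_succ]; ring
      _ ≤ (R + J + 1) * (R + J).factorial := Nat.mul_le_mul (by omega) ih
      _ = (R + (J + 1)).factorial := by
          rw [show R + (J + 1) = (R + J) + 1 by ring, Nat.factorial_succ]

lemma stirling_bounds : ∃ c₁ c₂ : ℝ, 0 < c₁ ∧ 0 < c₂ ∧ ∀ n : ℕ, 1 ≤ n →
    c₁ * (Real.sqrt n * ((n : ℝ) / exp 1) ^ n) ≤ n.factorial ∧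
    (n.factorial : ℝ) ≤ c₂ * (Real.sqrt n * ((n : ℝ) / exp 1) ^ n) := by
  obtain ⟨a, ha, hle⟩ := Stirling.stirlingSeq'_bounded_by_pos_constant
  refine ⟨a * Real.sqrt 2, (Stirling.stirlingSeq 1) * Real.sqrt 2, by positivity,
    by rw [Stirling.stirlingSeq_one]; positivity, fun n hn => ?_⟩
  obtain ⟨m, rfl⟩ := Nat.exists_eq_add_of_le hn
  set n := 1 + m with hdef
  have hn0 : (0:ℝ) < n := by positivity
  have hfact : (n.factorial : ℝ)
      = Stirling.stirlingSeq n * (Real.sqrt (2 * n) * ((n : ℝ) / exp 1) ^ n) := by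
    rw [Stirling.stirlingSeq]
    field_simp
  have hsqrt : Real.sqrt (2 * (n:ℝ)) = Real.sqrt 2 * Real.sqrt n := Real.sqrt_mul (by norm_num) _
  have hpos : (0:ℝ) < Real.sqrt n * ((n : ℝ) / exp 1) ^ n := by positivity
  have hlow : a ≤ Stirling.stirlingSeq n := by
    have h := hle m; rwa [show m + 1 = n by omega] at h
  have hhigh : Stirling.stirlingSeq n ≤ Stirling.stirlingSeq 1 := by
    have h5 : Stirling.stirlingSeq (m + 1) ≤ Stirling.stirlingSeq (0 + 1) :=
      Stirling.stirlingSeq'_antitone (Nat.zero_le m)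
    rw [show m + 1 = n by omega] at h5
    norm_num at h5
    rw [Stirling.stirlingSeq_one]
    exact h5
  constructor
  · rw [hfact, hsqrt]
    calc a * Real.sqrt 2 * (Real.sqrt n * ((n : ℝ) / exp 1) ^ n)
        = a * (Real.sqrt 2 * Real.sqrt n * ((n : ℝ) / exp 1) ^ n) := by ring
      _ ≤ Stirling.stirlingSeq n * (Real.sqrt 2 * Real.sqrt n * ((n : ℝ) / exp 1) ^ n) := by
          apply mul_le_mul_of_nonneg_right hlow; positivity
      _ = Stirling.stirlingSeq n * (Real.sqrt 2 * Real.sqrt ↑n * (↑n / exp 1) ^ n) := by ring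
  · rw [hfact, hsqrt]
    calc Stirling.stirlingSeq n * (Real.sqrt 2 * Real.sqrt ↑n * (↑n / exp 1) ^ n)
        ≤ Stirling.stirlingSeq 1 * (Real.sqrt 2 * Real.sqrt ↑n * (↑n / exp 1) ^ n) := by
          apply mul_le_mul_of_nonneg_right hhigh; positivity
      _ = Stirling.stirlingSeq 1 * Real.sqrt 2 * (Real.sqrt ↑n * (↑n / exp 1) ^ n) := by ring

lemma gibbs {K : ℕ} (πs πθ : Fin K → ℝ) (hspos : ∀ k, 0 < πs k) (hssum : ∑ k, πs k = 1)
    (hθpos : ∀ k, 0 < πθ k) (hθsum : ∑ k, πθ k = 1) (hne : πθ ≠ πs) :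
    0 < ∑ k, πθ k * Real.log (πθ k / πs k) := by
  obtain ⟨k₀, hk₀⟩ : ∃ k, πθ k ≠ πs k := by
    by_contra h; push_neg at h; exact hne (funext h)
  have key : ∀ k, πθ k - πs k - πθ k * Real.log (πθ k / πs k) ≤ 0 := by
    intro k
    have h1 : Real.log (πs k / πθ k) ≤ πs k / πθ k - 1 :=
      Real.log_le_sub_one_of_pos (div_pos (hspos k) (hθpos k))
    have h2 : Real.log (πs k / πθ k) = - Real.log (πθ k / πs k) := by
      rw [← Real.log_inv]; congr 1; field_simp
    have h3 := hθpos k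
    have := mul_le_mul_of_nonneg_left h1 h3.le
    rw [h2] at this
    have h4 : πθ k * (πs k / πθ k - 1) = πs k - πθ k := by field_simp
    nlinarith
  have keystrict : πθ k₀ - πs k₀ - πθ k₀ * Real.log (πθ k₀ / πs k₀) < 0 := by
    have h1 : Real.log (πs k₀ / πθ k₀) < πs k₀ / πθ k₀ - 1 := by
      apply Real.log_lt_sub_one_of_pos (div_pos (hspos k₀) (hθpos k₀))
      intro h
      apply hk₀
      have h6 := (div_eq_one_iff_eq (ne_of_gt (hθpos k₀))).mp h
      linarith
    have h2 : Real.log (πs k₀ / πθ k₀) = - Real.log (πθ k₀ / πs k₀) := by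
      rw [← Real.log_inv]; congr 1; field_simp
    have h3 := hθpos k₀
    have := (mul_lt_mul_iff_right₀ h3).mpr h1
    rw [h2] at this
    have h4 : πθ k₀ * (πs k₀ / πθ k₀ - 1) = πs k₀ - πθ k₀ := by field_simp
    nlinarith
  have hsumlt : ∑ k, (πθ k - πs k - πθ k * Real.log (πθ k / πs k)) < 0 := by
    have h : ∑ k, (πθ k - πs k - πθ k * Real.log (πθ k / πs k)) < ∑ _k : Fin K, (0:ℝ) := by
      apply Finset.sum_lt_sum (fun k _ => key k) ⟨k₀, Finset.mem_univ k₀, keystrict⟩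
    simpa using h
  have : ∑ k, (πθ k - πs k - πθ k * Real.log (πθ k / πs k))
      = - ∑ k, πθ k * Real.log (πθ k / πs k) := by
    rw [Finset.sum_sub_distrib, Finset.sum_sub_distrib, hssum, hθsum]; ring
  linarith [this ▸ hsumlt]

lemma prod_identity {K : ℕ} (pp : Fin K → ℝ) (hpos : ∀ k, 0 < pp k) (r : Fin K → ℕ) (R : ℕ)
    (hR : 1 ≤ R) (hr : ∀ k, 1 ≤ r k) (hsumr : ∑ k, r k = R) :
    ((R:ℝ) ^ R / ∏ k, ((r k : ℝ)) ^ (r k)) * ∏ k, pp k ^ (r k)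
      = Real.exp (-((R:ℝ) * ∑ k, ((r k : ℝ)/R) * Real.log (((r k : ℝ)/R) / pp k))) := by
  have hR0 : (0:ℝ) < R := by exact_mod_cast hR
  have hrk : ∀ k, (0:ℝ) < r k := fun k => by exact_mod_cast hr k
  have key : -((R:ℝ) * ∑ k, ((r k:ℝ)/R) * Real.log (((r k:ℝ)/R)/pp k))
      = ∑ k, (r k : ℝ) * Real.log ((R * pp k) / r k) := by
    rw [Finset.mul_sum, ← Finset.sum_neg_distrib]
    apply Finset.sum_congr rfl
    intro k _
    have h2 : ((r k:ℝ)/R)/pp k = ((R * pp k)/r k)⁻¹ := by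
      rw [inv_div, div_div]
    rw [h2, Real.log_inv]
    have := hrk k
    field_simp
  rw [key, Real.exp_sum]
  have hterm : ∀ k ∈ Finset.univ, Real.exp ((r k : ℝ) * Real.log ((R * pp k)/r k))
      = (((R:ℝ) * pp k)/ r k) ^ (r k) := by
    intro k _
    have h1 : (0:ℝ) < ((R:ℝ) * pp k)/r k := by
      have := hpos k; have := hrk k; positivity
    rw [← Real.log_pow, Real.exp_log (by positivity)]
  rw [Finset.prod_congr rfl hterm]
  have hRR : (R:ℝ)^R = ∏ k, (R:ℝ)^(r k) := by
    rw [Finset.prod_pow_eq_pow_sum, hsumr]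
  rw [hRR, ← Finset.prod_div_distrib, ← Finset.prod_mul_distrib]
  apply Finset.prod_congr rfl
  intro k _
  rw [div_pow, mul_pow]
  field_simp

lemma tendsto_bound_atBot (c : ℝ) (hc : 0 < c) (A : ℝ) :
    Tendsto (fun R : ℕ => A * Real.log (R + 1) - R * c) atTop atBot := by
  have hlog : ∀ᶠ x : ℝ in atTop, ‖A * Real.log x‖ ≤ (c / 4) * ‖x‖ := by
    have h := (Real.isLittleO_log_id_atTop.const_mul_left A).def (by positivity : (0:ℝ) < c / 4)
    simpa using h
  have hcomp : ∀ᶠ R : ℕ in atTop, ‖A * Real.log ((R:ℝ) + 1)‖ ≤ (c / 4) * ‖(R:ℝ) + 1‖ := by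
    have ht : Tendsto (fun R : ℕ => (R:ℝ) + 1) atTop atTop :=
      tendsto_atTop_add_const_right _ _ tendsto_natCast_atTop_atTop
    exact ht.eventually hlog
  have hbot : Tendsto (fun R : ℕ => -(c/4) * (R:ℝ) + c/2) atTop atBot := by
    apply tendsto_atBot_add_const_right
    exact Tendsto.const_mul_atTop_of_neg (by linarith : -(c/4) < 0) tendsto_natCast_atTop_atTop
  apply tendsto_atBot_mono' atTop _ hbot
  filter_upwards [hcomp, eventually_ge_atTop 1] with R h1 hR1
  have hR1' : (1:ℝ) ≤ R := by exact_mod_cast hR1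
  have h2 : A * Real.log ((R:ℝ) + 1) ≤ (c/4) * ((R:ℝ) + 1) := by
    have := le_trans (le_abs_self _) h1
    rwa [Real.norm_eq_abs, abs_of_nonneg (by linarith : (0:ℝ) ≤ (R:ℝ) + 1)] at this
  have : (c/4) * ((R:ℝ) + 1) ≤ (c/2) * R + c/2 := by nlinarith
  nlinarith




lemma caseTwo_det {K : ℕ} (hK : 2 ≤ K) (πs πθ : Fin K → ℝ)
    (hspos : ∀ k, 0 < πs k) (hssum : ∑ k, πs k = 1)
    (hθpos : ∀ k, 0 < πθ k) (hθsum : ∑ k, πθ k = 1) (hne : πθ ≠ πs)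
    (r : ℕ → Fin K → ℕ) (hsum : ∀ R, ∑ k, r R k = R)
    (hconv : ∀ k, Tendsto (fun R : ℕ => (r R k : ℝ) / R) atTop (nhds (πθ k))) :
    Tendsto (fun R : ℕ =>
        (((R + K - 1).factorial : ℕ) : ℝ) /
            ((((K - 1).factorial : ℕ) : ℝ) * ∏ k, (((r R k).factorial : ℕ) : ℝ)) *
          ∏ k, πs k ^ r R k) atTop (nhds 0) := by
  obtain ⟨J, rfl⟩ : ∃ J, K = J + 1 := ⟨K - 1, by omega⟩
  simp only [show ∀ R : ℕ, R + (J + 1) - 1 = R + J from fun R => by omega,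
    show J + 1 - 1 = J from by omega]
  set D : ℕ → ℝ := fun R => ∑ k, ((r R k : ℝ)/R) * Real.log (((r R k : ℝ)/R) / πs k) with hD
  set d : ℝ := ∑ k, πθ k * Real.log (πθ k / πs k) with hd
  have hdpos : 0 < d := gibbs πs πθ hspos hssum hθpos hθsum hne
  have hDconv : Tendsto D atTop (nhds d) := by
    apply tendsto_finset_sum
    intro k _
    have h1 : Tendsto (fun R : ℕ => (r R k : ℝ)/R / πs k) atTop (nhds (πθ k / πs k)) :=
      (hconv k).div_const _
    have h2 : Tendsto (fun R : ℕ => Real.log ((r R k : ℝ)/R / πs k)) atTop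
        (nhds (Real.log (πθ k / πs k))) :=
      (Real.continuousAt_log (ne_of_gt (div_pos (hθpos k) (hspos k)))).tendsto.comp h1
    exact (hconv k).mul h2
  have hev1 : ∀ᶠ R : ℕ in atTop, ∀ k, 1 ≤ r R k := by
    rw [Filter.eventually_all]
    intro k
    have h1 : ∀ᶠ R : ℕ in atTop, πθ k / 2 < (r R k : ℝ)/R :=
      (hconv k).eventually (eventually_gt_nhds (by linarith [hθpos k]))
    filter_upwards [h1, eventually_ge_atTop 1] with R hR hR1
    by_contra h
    push_neg at h
    have h0 : r R k = 0 := by omega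
    rw [h0] at hR
    norm_num at hR
    linarith [hθpos k]
  -- upper bound
  have hUB : ∀ᶠ R : ℕ in atTop,
      (((R + J).factorial : ℝ) / ((J.factorial : ℝ) * ∏ k, ((r R k).factorial : ℝ)) *
        ∏ k, πs k ^ r R k) ≤ ((R:ℝ) + 1) ^ J * Real.exp (-((R:ℝ) * D R)) := by
    filter_upwards [hev1, eventually_ge_atTop 1] with R hr hR1
    have hpi : (0:ℝ) ≤ ∏ k, πs k ^ r R k :=
      Finset.prod_nonneg (fun k _ => pow_nonneg (hspos k).le _)
    have hfactpos : (0:ℝ) < (J.factorial : ℝ) * ∏ k, ((r R k).factorial : ℝ) := by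
      apply mul_pos
      · exact_mod_cast Nat.factorial_pos J
      · apply Finset.prod_pos
        intro k _
        exact_mod_cast Nat.factorial_pos (r R k)
    have hrpow : (0:ℝ) < ∏ k, ((r R k : ℝ)) ^ (r R k) := by
      apply Finset.prod_pos
      intro k _
      have : (0:ℝ) < (r R k : ℝ) := by exact_mod_cast hr k
      positivity
    have hnat : (R + J).factorial * ∏ k, (r R k) ^ (r R k) ≤
        ((R + 1) ^ J * J.factorial) * (R ^ R * ∏ k, (r R k).factorial) := by
      calc (R + J).factorial * ∏ k, (r R k) ^ (r R k)
          ≤ ((R + 1) ^ J * J.factorial * R.factorial) * ∏ k, (r R k) ^ (r R k) :=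
            Nat.mul_le_mul_right _ (fact_add_le R J)
        _ = ((R + 1) ^ J * J.factorial) * (R.factorial * ∏ k, (r R k) ^ (r R k)) := by ring
        _ ≤ ((R + 1) ^ J * J.factorial) * (R ^ R * ∏ k, (r R k).factorial) := by
            apply Nat.mul_le_mul_left
            have h := factorial_sum_mul_prod_pow_le Finset.univ (r R)
            rwa [hsum R] at h
    have hnatR : ((R + J).factorial : ℝ) * ∏ k, ((r R k : ℝ)) ^ (r R k) ≤
        (((R:ℝ) + 1) ^ J * (J.factorial : ℝ)) * ((R:ℝ) ^ R * ∏ k, ((r R k).factorial : ℝ)) := by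
      have := hnat
      have hcast : (((R + J).factorial * ∏ k, (r R k) ^ (r R k) : ℕ) : ℝ) ≤
          ((((R + 1) ^ J * J.factorial) * (R ^ R * ∏ k, (r R k).factorial) : ℕ) : ℝ) := by
        exact_mod_cast this
      push_cast at hcast
      convert hcast using 2 <;> push_cast <;> ring
    simp only [hD]
    rw [← prod_identity πs hspos (r R) R hR1 hr (hsum R), div_mul_eq_mul_div,
      div_le_iff₀ hfactpos,
      show ((R:ℝ)+1)^J * ((R:ℝ)^R / (∏ k, ((r R k:ℝ))^(r R k)) * ∏ k, πs k ^ r R k) *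
          ((J.factorial:ℝ) * ∏ k, ((r R k).factorial : ℝ))
        = ((((R:ℝ)+1)^J * (J.factorial:ℝ)) * ((R:ℝ)^R * ∏ k, ((r R k).factorial:ℝ)))
            * (∏ k, πs k ^ r R k) / (∏ k, ((r R k:ℝ))^(r R k)) from by ring,
      le_div_iff₀ hrpow]
    calc ((R+J).factorial:ℝ) * (∏ k, πs k ^ r R k) * (∏ k, ((r R k:ℝ))^(r R k))
        = (((R+J).factorial:ℝ) * ∏ k, ((r R k:ℝ))^(r R k)) * (∏ k, πs k ^ r R k) := by ring
      _ ≤ ((((R:ℝ)+1)^J * (J.factorial:ℝ)) * ((R:ℝ)^R * ∏ k, ((r R k).factorial:ℝ)))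
            * (∏ k, πs k ^ r R k) := mul_le_mul_of_nonneg_right hnatR hpi
  -- conclude
  have hV : Tendsto (fun R : ℕ => ((J:ℝ)) * Real.log ((R:ℝ)+1) - (R:ℝ) * (d/2)) atTop atBot :=
    tendsto_bound_atBot (d/2) (by linarith) J
  have hevD : ∀ᶠ R : ℕ in atTop, d/2 ≤ D R :=
    hDconv.eventually (eventually_ge_nhds (by linarith))
  have hUB2 : ∀ᶠ R : ℕ in atTop, ((R:ℝ)+1)^J * Real.exp (-((R:ℝ) * D R))
      ≤ Real.exp ((J:ℝ) * Real.log ((R:ℝ)+1) - (R:ℝ) * (d/2)) := by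
    filter_upwards [hevD] with R hdR
    have h1 : ((R:ℝ)+1)^J = Real.exp ((J:ℝ) * Real.log ((R:ℝ)+1)) := by
      rw [← Real.log_pow, Real.exp_log (by positivity)]
    rw [h1, ← Real.exp_add]
    apply Real.exp_le_exp.mpr
    have h2 : (R:ℝ) * (d/2) ≤ (R:ℝ) * D R := mul_le_mul_of_nonneg_left hdR (by positivity)
    linarith
  have hexp0 : Tendsto (fun R : ℕ => Real.exp ((J:ℝ) * Real.log ((R:ℝ)+1) - (R:ℝ) * (d/2)))
      atTop (nhds 0) := Real.tendsto_exp_atBot.comp hV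
  apply squeeze_zero'
  · filter_upwards with R
    apply mul_nonneg
    · apply div_nonneg (Nat.cast_nonneg _)
      apply mul_nonneg (Nat.cast_nonneg _)
      exact Finset.prod_nonneg (fun k _ => Nat.cast_nonneg _)
    · exact Finset.prod_nonneg (fun k _ => pow_nonneg (hspos k).le _)
  · exact (hUB.and hUB2).mono fun R ⟨h1, h2⟩ => le_trans h1 h2
  · exact hexp0

lemma caseOne_det {K : ℕ} (hK : 2 ≤ K) (pp : Fin K → ℝ)
    (hpos : ∀ k, 0 < pp k) (hsum1 : ∑ k, pp k = 1)
    (r : ℕ → Fin K → ℕ) (hsum : ∀ R, ∑ k, r R k = R)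
    (hconv : ∀ k, Tendsto (fun R : ℕ => (r R k : ℝ) / R) atTop (nhds (pp k)))
    (hfl : ∀ k, ∀ᶠ R : ℕ in atTop,
      ((r R k : ℝ) - R * pp k) ^ 2 ≤ (pp k * (K - 1) / (8 * K)) * (R * Real.log R)) :
    Tendsto (fun R : ℕ =>
        (((R + K - 1).factorial : ℕ) : ℝ) /
            ((((K - 1).factorial : ℕ) : ℝ) * ∏ k, (((r R k).factorial : ℕ) : ℝ)) *
          ∏ k, pp k ^ r R k) atTop atTop := by
  obtain ⟨J, rfl⟩ : ∃ J, K = J + 1 := ⟨K - 1, by omega⟩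
  have hJ1 : 1 ≤ J := by omega
  simp only [show ∀ R : ℕ, R + (J + 1) - 1 = R + J from fun R => by omega,
    show J + 1 - 1 = J from by omega]
  obtain ⟨c₁, c₂, hc₁, hc₂, hstir⟩ := stirling_bounds
  set F : ℝ := (J.factorial : ℝ) with hF
  have hFpos : (0:ℝ) < F := by rw [hF]; exact_mod_cast Nat.factorial_pos J
  set C : ℝ := c₁ / (F * c₂ ^ (J + 1)) with hC
  have hCpos : 0 < C := by rw [hC]; positivity
  -- eventual positivity of all counts
  have hev1 : ∀ᶠ R : ℕ in atTop, ∀ k, 1 ≤ r R k := by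
    rw [Filter.eventually_all]
    intro k
    have h1 : ∀ᶠ R : ℕ in atTop, pp k / 2 < (r R k : ℝ)/R :=
      (hconv k).eventually (eventually_gt_nhds (by linarith [hpos k]))
    filter_upwards [h1, eventually_ge_atTop 1] with R hR hR1
    by_contra h
    push_neg at h
    have h0 : r R k = 0 := by omega
    rw [h0] at hR
    norm_num at hR
    linarith [hpos k]
  have hflall : ∀ᶠ R : ℕ in atTop, ∀ k,
      ((r R k : ℝ) - R * pp k) ^ 2 ≤ (pp k * ((J:ℝ) + 1 - 1) / (8 * ((J:ℝ)+1))) * (R * Real.log R) := by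
    rw [Filter.eventually_all]
    intro k
    have := hfl k
    convert this using 4 <;> push_cast <;> ring
  -- the main eventual lower bound
  have hLB : ∀ᶠ R : ℕ in atTop,
      C * Real.exp ((3 * (J:ℝ) / 8) * Real.log R)
        ≤ (((R + J).factorial : ℝ) / ((J.factorial : ℝ) * ∏ k, ((r R k).factorial : ℝ)) *
            ∏ k, pp k ^ r R k) := by
    filter_upwards [hev1, hflall, eventually_ge_atTop 2] with R hr1 hfluct hR2
    have hR1 : 1 ≤ R := by omega
    have hR0 : (0:ℝ) < R := by exact_mod_cast hR1
    have hlogR : 0 ≤ Real.log R := Real.log_nonneg (by exact_mod_cast hR1)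
    set sR : ℝ := Real.sqrt R with hsR
    have hsRpos : 0 < sR := Real.sqrt_pos.mpr hR0
    have hsR2 : sR ^ 2 = R := Real.sq_sqrt hR0.le
    have hrkpos : ∀ k, (0:ℝ) < (r R k : ℝ) := fun k => by exact_mod_cast hr1 k
    have hrkleR : ∀ k, (r R k : ℝ) ≤ R := by
      intro k
      have h := Finset.single_le_sum (f := fun j => r R j) (fun j _ => Nat.zero_le _)
        (mem_univ k)
      rw [hsum R] at h
      exact_mod_cast h
    have hpi : (0:ℝ) < ∏ k, pp k ^ r R k :=
      Finset.prod_pos (fun k _ => pow_pos (hpos k) _)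
    have hprodfact : (0:ℝ) < ∏ k, ((r R k).factorial : ℝ) :=
      Finset.prod_pos (fun k _ => by exact_mod_cast Nat.factorial_pos (r R k))
    have hprodpow : (0:ℝ) < ∏ k, ((r R k : ℝ)) ^ (r R k) :=
      Finset.prod_pos (fun k _ => pow_pos (hrkpos k) _)
    -- Step 1: numerator lower bound
    have hnum : (R:ℝ) ^ J * (c₁ * (sR * ((R:ℝ)/exp 1) ^ R)) ≤ ((R + J).factorial : ℝ) := by
      have h1 : (R:ℝ) ^ J * (R.factorial : ℝ) ≤ ((R + J).factorial : ℝ) := by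
        exact_mod_cast le_fact_add R J
      have h2 := (hstir R hR1).1
      calc (R:ℝ) ^ J * (c₁ * (sR * ((R:ℝ)/exp 1) ^ R))
          ≤ (R:ℝ) ^ J * (R.factorial : ℝ) :=
            mul_le_mul_of_nonneg_left h2 (by positivity)
        _ ≤ ((R + J).factorial : ℝ) := h1
    -- Step 2: denominator upper bound
    have hden : ∏ k, ((r R k).factorial : ℝ)
        ≤ c₂ ^ (J + 1) * (sR ^ (J + 1) * ∏ k, ((r R k : ℝ)/exp 1) ^ (r R k)) := by
      have hperk : ∀ k ∈ Finset.univ, ((r R k).factorial : ℝ)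
          ≤ c₂ * (sR * ((r R k : ℝ)/exp 1) ^ (r R k)) := by
        intro k _
        have h1 := (hstir (r R k) (hr1 k)).2
        have h2 : Real.sqrt (r R k) ≤ sR := Real.sqrt_le_sqrt (hrkleR k)
        calc ((r R k).factorial : ℝ) ≤ c₂ * (Real.sqrt (r R k) * ((r R k : ℝ)/exp 1) ^ (r R k)) := h1
          _ ≤ c₂ * (sR * ((r R k : ℝ)/exp 1) ^ (r R k)) := by
              have hnn : (0:ℝ) ≤ ((r R k : ℝ)/exp 1) ^ (r R k) := by positivity
              exact mul_le_mul_of_nonneg_left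
                (mul_le_mul_of_nonneg_right h2 hnn) hc₂.le
      calc ∏ k, ((r R k).factorial : ℝ) ≤ ∏ k, (c₂ * (sR * ((r R k : ℝ)/exp 1) ^ (r R k))) :=
            Finset.prod_le_prod (fun k _ => by positivity) hperk
        _ = c₂ ^ (J + 1) * (sR ^ (J + 1) * ∏ k, ((r R k : ℝ)/exp 1) ^ (r R k)) := by
            rw [Finset.prod_mul_distrib, Finset.prod_mul_distrib, Finset.prod_const,
              Finset.prod_const, Finset.card_univ, Fintype.card_fin]
    -- Step 3: chi-square bound
    have hchi : (R:ℝ) * (∑ k, ((r R k : ℝ)/R) * Real.log (((r R k : ℝ)/R) / pp k))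
        ≤ ((J:ℝ)/8) * Real.log R := by
      have hterm : ∀ k ∈ Finset.univ, (R:ℝ) * (((r R k : ℝ)/R) * Real.log (((r R k : ℝ)/R) / pp k))
          ≤ ((r R k : ℝ) - R * pp k) ^ 2 / (R * pp k) + ((r R k : ℝ) - R * pp k) := by
        intro k _
        have hppk := hpos k
        have hlog : Real.log ((r R k : ℝ) / (R * pp k)) ≤ (r R k : ℝ)/(R * pp k) - 1 :=
          Real.log_le_sub_one_of_pos (div_pos (hrkpos k) (mul_pos hR0 hppk))
        have heqd : ((r R k : ℝ)/R) / pp k = (r R k : ℝ) / (R * pp k) := by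
          rw [div_div]
        rw [heqd]
        have h3 : (R:ℝ) * (((r R k : ℝ)/R) * Real.log ((r R k : ℝ) / (R * pp k)))
            = (r R k : ℝ) * Real.log ((r R k : ℝ) / (R * pp k)) := by
          field_simp
        rw [h3]
        have h4 : (r R k : ℝ) * ((r R k : ℝ)/(R * pp k) - 1)
            = ((r R k : ℝ) - R * pp k) ^ 2 / (R * pp k) + ((r R k : ℝ) - R * pp k) := by
          field_simp
          ring
        calc (r R k : ℝ) * Real.log ((r R k : ℝ) / (R * pp k))
            ≤ (r R k : ℝ) * ((r R k : ℝ)/(R * pp k) - 1) :=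
              mul_le_mul_of_nonneg_left hlog (hrkpos k).le
          _ = _ := h4
      have hsumterm : ∑ k, ((r R k : ℝ) - R * pp k) = 0 := by
        rw [Finset.sum_sub_distrib, ← Finset.mul_sum, hsum1, mul_one]
        have : ∑ k, (r R k : ℝ) = R := by exact_mod_cast congrArg Nat.cast (hsum R)
        linarith [this]
      have hsq : ∀ k ∈ Finset.univ, ((r R k : ℝ) - R * pp k) ^ 2 / (R * pp k)
          ≤ ((J:ℝ)/(8 * ((J:ℝ)+1))) * Real.log R := by
        intro k _
        have hppk := hpos k
        have h5 := hfluct k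
        rw [div_le_iff₀ (by positivity)]
        calc ((r R k : ℝ) - R * pp k) ^ 2
            ≤ (pp k * ((J:ℝ) + 1 - 1) / (8 * ((J:ℝ)+1))) * (R * Real.log R) := h5
          _ = ((J:ℝ)/(8 * ((J:ℝ)+1))) * Real.log R * (R * pp k) := by ring
      calc (R:ℝ) * (∑ k, ((r R k : ℝ)/R) * Real.log (((r R k : ℝ)/R) / pp k))
          = ∑ k, (R:ℝ) * (((r R k : ℝ)/R) * Real.log (((r R k : ℝ)/R) / pp k)) := by
            rw [Finset.mul_sum]
        _ ≤ ∑ k, (((r R k : ℝ) - R * pp k) ^ 2 / (R * pp k) + ((r R k : ℝ) - R * pp k)) :=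
            Finset.sum_le_sum hterm
        _ = ∑ k, ((r R k : ℝ) - R * pp k) ^ 2 / (R * pp k) := by
            rw [Finset.sum_add_distrib, hsumterm, add_zero]
        _ ≤ ∑ _k : Fin (J + 1), ((J:ℝ)/(8 * ((J:ℝ)+1))) * Real.log R :=
            Finset.sum_le_sum hsq
        _ = ((J:ℝ)/8) * Real.log R := by
            rw [Finset.sum_const, Finset.card_univ, Fintype.card_fin, nsmul_eq_mul]
            push_cast
            field_simp
    -- Step 4: assemble
    have hmain : C * (sR ^ J * (((R:ℝ) ^ R / ∏ k, ((r R k : ℝ)) ^ (r R k)) * ∏ k, pp k ^ r R k))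
        ≤ (((R + J).factorial : ℝ) / ((J.factorial : ℝ) * ∏ k, ((r R k).factorial : ℝ)) *
            ∏ k, pp k ^ r R k) := by
      have hdiv : ((R:ℝ) ^ J * (c₁ * (sR * ((R:ℝ)/exp 1) ^ R))) /
            (F * (c₂ ^ (J + 1) * (sR ^ (J + 1) * ∏ k, ((r R k : ℝ)/exp 1) ^ (r R k))))
          ≤ ((R + J).factorial : ℝ) / ((J.factorial : ℝ) * ∏ k, ((r R k).factorial : ℝ)) := by
        apply div_le_div₀ (Nat.cast_nonneg _) hnum
        · apply mul_pos hFpos hprodfact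
        · exact mul_le_mul_of_nonneg_left hden hFpos.le
      have heq : ((R:ℝ) ^ J * (c₁ * (sR * ((R:ℝ)/exp 1) ^ R))) /
            (F * (c₂ ^ (J + 1) * (sR ^ (J + 1) * ∏ k, ((r R k : ℝ)/exp 1) ^ (r R k))))
          = C * (sR ^ J * ((R:ℝ) ^ R / ∏ k, ((r R k : ℝ)) ^ (r R k))) := by
        have hb : ∏ k, ((r R k : ℝ)/exp 1) ^ (r R k)
            = (∏ k, ((r R k : ℝ)) ^ (r R k)) / (exp 1) ^ R := by
          have he : ∏ k, (exp 1:ℝ) ^ (r R k) = (exp 1:ℝ) ^ R := by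
            rw [Finset.prod_pow_eq_pow_sum, hsum R]
          rw [← he, ← Finset.prod_div_distrib]
          apply Finset.prod_congr rfl
          intro k _
          rw [div_pow]
        have ha : ((R:ℝ)/exp 1) ^ R = (R:ℝ) ^ R / (exp 1) ^ R := div_pow _ _ _
        have hcR : (R:ℝ) ^ J = sR ^ (2 * J) := by
          rw [pow_mul, hsR2]
        rw [hb, ha, hC, hcR]
        have hexpR : (0:ℝ) < (exp 1) ^ R := by positivity
        field_simp
        ring
      calc C * (sR ^ J * (((R:ℝ) ^ R / ∏ k, ((r R k : ℝ)) ^ (r R k)) * ∏ k, pp k ^ r R k))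
          = (C * (sR ^ J * ((R:ℝ) ^ R / ∏ k, ((r R k : ℝ)) ^ (r R k)))) * ∏ k, pp k ^ r R k := by
            ring
        _ ≤ (((R + J).factorial : ℝ) / ((J.factorial : ℝ) * ∏ k, ((r R k).factorial : ℝ))) *
              ∏ k, pp k ^ r R k := by
            apply mul_le_mul_of_nonneg_right _ hpi.le
            rw [← heq]
            exact hdiv
    -- combine with prod_identity and chi bound
    rw [prod_identity pp hpos (r R) R hR1 hr1 (hsum R)] at hmain
    have hexpbound : Real.exp ((3 * (J:ℝ)/8) * Real.log R)
        ≤ sR ^ J * Real.exp (-((R:ℝ) * ∑ k, ((r R k : ℝ)/R) * Real.log (((r R k : ℝ)/R) / pp k))) := by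
      have hsRJ : sR ^ J = Real.exp ((J:ℝ) * (Real.log R / 2)) := by
        rw [← Real.log_sqrt hR0.le, ← hsR, ← Real.log_pow, Real.exp_log (by positivity)]
      rw [hsRJ, ← Real.exp_add]
      apply Real.exp_le_exp.mpr
      have := hchi
      nlinarith [hchi]
    calc C * Real.exp ((3 * (J:ℝ)/8) * Real.log R)
        ≤ C * (sR ^ J * Real.exp (-((R:ℝ) * ∑ k, ((r R k : ℝ)/R) *
            Real.log (((r R k : ℝ)/R) / pp k)))) :=
          mul_le_mul_of_nonneg_left hexpbound hCpos.le
      _ ≤ _ := hmain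
  -- final: tendsto
  have htt : Tendsto (fun R : ℕ => C * Real.exp ((3 * (J:ℝ) / 8) * Real.log R)) atTop atTop := by
    apply Tendsto.const_mul_atTop hCpos
    apply Real.tendsto_exp_atTop.comp
    apply Tendsto.const_mul_atTop (by positivity : (0:ℝ) < 3 * (J:ℝ)/8)
    exact Real.tendsto_log_atTop.comp tendsto_natCast_atTop_atTop
  exact tendsto_atTop_mono' atTop hLB htt
end Det

section Prob

variable {Ω : Type*} [MeasurableSpace Ω] (P : Measure Ω) [IsProbabilityMeasure P]



lemma chernoff_one {Z : ℕ → Ω → ℝ} (hind : iIndepFun Z P)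
    (hmeas : ∀ i, Measurable (Z i)) (hbd : ∀ i x, |Z i x| ≤ 1)
    (hmgf : ∀ i t, mgf (Z i) P t ≤ exp (t ^ 2)) (s : Finset ℕ) {a : ℝ} (ha : 0 < a) :
    (P {x | a ≤ ∑ i ∈ s, Z i x}).toReal ≤ exp (-(a ^ 2) / (4 * s.card)) := by
  rcases Nat.eq_zero_or_pos s.card with hc | hc
  · rw [hc]
    have : (-(a^2) / (4 * (0:ℕ)) : ℝ) = 0 := by norm_num
    rw [this, Real.exp_zero]
    calc (P {x | a ≤ ∑ i ∈ s, Z i x}).toReal ≤ (P Set.univ).toReal := by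
          apply ENNReal.toReal_mono (measure_ne_top _ _) (measure_mono (Set.subset_univ _))
      _ = 1 := by simp
  · set t : ℝ := a / (2 * s.card) with ht
    have htpos : 0 < t := by positivity
    have hsum_meas : Measurable (fun x => ∑ i ∈ s, Z i x) := by
      exact Finset.measurable_sum s (fun i _ => hmeas i)
    have hint : Integrable (fun x => exp (t * ∑ i ∈ s, Z i x)) P := by
      apply Integrable.mono' (integrable_const (exp (t * s.card)))
        ((hsum_meas.const_mul t).exp.aestronglyMeasurable)
      filter_upwards with x
      rw [norm_of_nonneg (exp_pos _).le, exp_le_exp]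
      apply mul_le_mul_of_nonneg_left _ htpos.le
      calc ∑ i ∈ s, Z i x ≤ ∑ i ∈ s, 1 :=
          Finset.sum_le_sum (fun i _ => (abs_le.mp (hbd i x)).2)
        _ = s.card := by simp
    have hch := measure_ge_le_exp_mul_mgf (μ := P) (X := fun x => ∑ i ∈ s, Z i x) a htpos.le ?hi
    case hi => exact hint
    have hmgfsum : mgf (fun x => ∑ i ∈ s, Z i x) P t ≤ exp (s.card * t ^ 2) := by
      have heq : mgf (∑ i ∈ s, Z i) P t = ∏ i ∈ s, mgf (Z i) P t := hind.mgf_sum hmeas s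
      have : (fun x => ∑ i ∈ s, Z i x) = ∑ i ∈ s, Z i := by
        funext x; simp [Finset.sum_apply]
      rw [this, heq]
      calc ∏ i ∈ s, mgf (Z i) P t ≤ ∏ i ∈ s, exp (t ^ 2) := by
            apply Finset.prod_le_prod (fun i _ => mgf_nonneg) (fun i _ => hmgf i t)
        _ = exp (s.card * t ^ 2) := by
            rw [Finset.prod_const, ← Real.exp_nat_mul]
    calc (P {x | a ≤ ∑ i ∈ s, Z i x}).toReal ≤ exp (-t * a) * mgf (fun x => ∑ i ∈ s, Z i x) P t :=
          hch
      _ ≤ exp (-t * a) * exp (s.card * t ^ 2) :=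
          mul_le_mul_of_nonneg_left hmgfsum (exp_pos _).le
      _ = exp (-t * a + s.card * t ^ 2) := by rw [← Real.exp_add]
      _ = exp (-(a ^ 2) / (4 * s.card)) := by
          congr 1
          have hcpos : (0:ℝ) < (s.card : ℝ) := by exact_mod_cast hc
          rw [ht]; field_simp; ring

lemma chernoff_abs {Z : ℕ → Ω → ℝ} (hind : iIndepFun Z P)
    (hmeas : ∀ i, Measurable (Z i)) (hbd : ∀ i x, |Z i x| ≤ 1)
    (hmgf : ∀ i t, mgf (Z i) P t ≤ exp (t ^ 2)) (s : Finset ℕ) {a : ℝ} (ha : 0 < a) :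
    (P {x | a ≤ |∑ i ∈ s, Z i x|}).toReal ≤ 2 * exp (-(a ^ 2) / (4 * s.card)) := by
  have hZ' : iIndepFun (fun i => -(Z i)) P :=
    hind.comp (fun i => fun y : ℝ => -y) (fun i => measurable_neg)
  have hmeas' : ∀ i, Measurable (fun x => -(Z i x)) := fun i => (hmeas i).neg
  have hbd' : ∀ i x, |(-(Z i x))| ≤ 1 := by intro i x; rw [abs_neg]; exact hbd i x
  have hmgf' : ∀ i t, mgf (fun x => -(Z i x)) P t ≤ exp (t ^ 2) := by
    intro i t
    have : (fun x => -(Z i x)) = -(Z i) := rfl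
    rw [this, mgf_neg]
    calc mgf (Z i) P (-t) ≤ exp ((-t) ^ 2) := hmgf i (-t)
      _ = exp (t ^ 2) := by rw [neg_pow]; norm_num
  have h1 := chernoff_one P hind hmeas hbd hmgf s ha
  have h2 := chernoff_one P hZ' hmeas' hbd' hmgf' s ha
  simp only [Pi.neg_apply] at h2
  have hsub : {x | a ≤ |∑ i ∈ s, Z i x|} ⊆
      {x | a ≤ ∑ i ∈ s, Z i x} ∪ {x | a ≤ ∑ i ∈ s, -(Z i x)} := by
    intro x hx
    rcases abs_cases (∑ i ∈ s, Z i x) with ⟨he, _⟩ | ⟨he, _⟩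
    · left; rw [Set.mem_setOf_eq, ← he]; exact hx
    · right
      rw [Set.mem_setOf_eq, Finset.sum_neg_distrib]
      rw [Set.mem_setOf_eq, he] at hx
      linarith [hx]
  calc (P {x | a ≤ |∑ i ∈ s, Z i x|}).toReal
      ≤ (P ({x | a ≤ ∑ i ∈ s, Z i x} ∪ {x | a ≤ ∑ i ∈ s, -(Z i x)})).toReal :=
        ENNReal.toReal_mono (measure_ne_top _ _) (measure_mono hsub)
    _ ≤ (P {x | a ≤ ∑ i ∈ s, Z i x} + P {x | a ≤ ∑ i ∈ s, -(Z i x)}).toReal :=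
        ENNReal.toReal_mono (by finiteness) (measure_union_le _ _)
    _ = (P {x | a ≤ ∑ i ∈ s, Z i x}).toReal + (P {x | a ≤ ∑ i ∈ s, -(Z i x)}).toReal :=
        ENNReal.toReal_add (measure_ne_top _ _) (measure_ne_top _ _)
    _ ≤ 2 * exp (-(a ^ 2) / (4 * s.card)) := by linarith


lemma ottaviani {Z : ℕ → Ω → ℝ} (hind : iIndepFun Z P)
    (hmeas : ∀ i, Measurable (Z i)) (N : ℕ) {a : ℝ} (ha : 0 < a)
    (hsmall : ∀ n ≤ N, (P {x | a ≤ |∑ i ∈ Finset.Ico n N, Z i x|}).toReal ≤ 1 / 2) :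
    (P {x | ∃ n ≤ N, 2 * a ≤ |∑ i ∈ Finset.range n, Z i x|}).toReal ≤
      2 * (P {x | a ≤ |∑ i ∈ Finset.range N, Z i x|}).toReal := by
  classical
  set S : ℕ → Ω → ℝ := fun n x => ∑ i ∈ Finset.range n, Z i x with hS
  have hSmeas : ∀ n, Measurable (S n) := fun n => Finset.measurable_sum _ (fun i _ => hmeas i)
  set A : ℕ → Set Ω := fun n => {x | 2 * a ≤ |S n x| ∧ ∀ m < n, |S m x| < 2 * a} with hA
  -- splitting identity
  have hsplit : ∀ n ≤ N, ∀ x, ∑ i ∈ Finset.Ico n N, Z i x = S N x - S n x := by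
    intro n hn x
    have h0 : ∑ i ∈ Finset.Ico 0 n, Z i x + ∑ i ∈ Finset.Ico n N, Z i x
        = ∑ i ∈ Finset.Ico 0 N, Z i x :=
      Finset.sum_Ico_consecutive (fun i => Z i x) (Nat.zero_le n) hn
    simp only [hS]
    simp only [Finset.range_eq_Ico]
    linarith [h0]
  -- A n measurable
  have hAmeas : ∀ n, MeasurableSet (A n) := by
    intro n
    apply MeasurableSet.inter
    · exact measurableSet_le measurable_const (hSmeas n).abs
    · show MeasurableSet {x | ∀ m < n, |S m x| < 2 * a}
      rw [show {x | ∀ m < n, |S m x| < 2 * a} = ⋂ m ∈ Set.Iio n, {x | |S m x| < 2 * a} by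
        ext x; simp]
      exact MeasurableSet.biInter (Set.to_countable _)
        (fun m _ => measurableSet_lt (hSmeas m).abs measurable_const)
  -- cover
  have hcover : {x | ∃ n ≤ N, 2 * a ≤ |S n x|} = ⋃ n ∈ Finset.range (N + 1), A n := by
    ext x
    simp only [Set.mem_setOf_eq, Set.mem_iUnion, Finset.mem_range, Nat.lt_succ_iff]
    constructor
    · rintro ⟨n, hn, h2⟩
      have hex : ∃ m, 2 * a ≤ |S m x| := ⟨n, h2⟩
      refine ⟨Nat.find hex, le_trans (Nat.find_min' hex h2) hn, Nat.find_spec hex, ?_⟩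
      intro m hm
      exact not_le.mp (Nat.find_min hex hm)
    · rintro ⟨n, hn, h1, _⟩
      exact ⟨n, hn, h1⟩
  -- disjoint
  have hdisj : (Finset.range (N + 1) : Set ℕ).PairwiseDisjoint A := by
    intro m hm n hn hmn
    apply Set.disjoint_left.mpr
    rcases lt_or_gt_of_ne hmn with h | h
    · intro x hxm hxn
      exact absurd hxm.1 (not_le.mpr (hxn.2 m h))
    · intro x hxm hxn
      exact absurd hxn.1 (not_le.mpr (hxm.2 n h))
  -- the per-n bound
  have hkey : ∀ n ≤ N, (P (A n)).toReal ≤ 2 * (P (A n ∩ {x | a ≤ |S N x|})).toReal := by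
    intro n hn
    -- independence setup
    set T : Ω → (↥(Finset.range n) → ℝ) := fun x i => Z i x with hT
    set W : Ω → (↥(Finset.Ico n N) → ℝ) := fun x i => Z i x with hW
    have hTW : IndepFun T W P := by
      apply hind.indepFun_finset (Finset.range n) (Finset.Ico n N) _ hmeas
      rw [Finset.disjoint_left]
      intro i hi hi2
      rw [Finset.mem_range] at hi
      rw [Finset.mem_Ico] at hi2
      omega
    set σ : ℕ → (↥(Finset.range n) → ℝ) → ℝ :=
      fun m v => ∑ i : ↥(Finset.range n), if (i : ℕ) < m then v i else 0 with hσ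
    have hσmeas : ∀ m, Measurable (σ m) := by
      intro m
      apply Finset.measurable_sum
      intro i _
      split_ifs
      · exact measurable_pi_apply i
      · exact measurable_const
    have hσT : ∀ m ≤ n, ∀ x, σ m (T x) = S m x := by
      intro m hm x
      simp only [hσ, hT, hS]
      rw [Finset.sum_coe_sort (Finset.range n) (fun j => if j < m then Z j x else 0)]
      rw [← Finset.sum_filter]
      congr 1
      ext j
      simp only [Finset.mem_filter, Finset.mem_range]
      omega
    set ψ : (↥(Finset.Ico n N) → ℝ) → ℝ := fun u => ∑ i : ↥(Finset.Ico n N), u i with hψ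
    have hψmeas : Measurable ψ := Finset.measurable_sum _ (fun i _ => measurable_pi_apply i)
    have hψW : ∀ x, ψ (W x) = S N x - S n x := by
      intro x
      simp only [hψ, hW]
      rw [Finset.sum_coe_sort (Finset.Ico n N) (fun j => Z j x)]
      exact hsplit n hn x
    set D : Set (↥(Finset.range n) → ℝ) :=
      {v | 2 * a ≤ |σ n v| ∧ ∀ m < n, |σ m v| < 2 * a} with hD
    have hDmeas : MeasurableSet D := by
      apply MeasurableSet.inter
      · exact measurableSet_le measurable_const (hσmeas n).abs
      · show MeasurableSet {v | ∀ m < n, |σ m v| < 2 * a}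
        rw [show {v | ∀ m < n, |σ m v| < 2 * a} = ⋂ m ∈ Set.Iio n, {v | |σ m v| < 2 * a} by
          ext v; simp]
        exact MeasurableSet.biInter (Set.to_countable _)
          (fun m _ => measurableSet_lt (hσmeas m).abs measurable_const)
    set E : Set (↥(Finset.Ico n N) → ℝ) := {u | |ψ u| ≤ a} with hE
    have hEmeas : MeasurableSet E := measurableSet_le hψmeas.abs measurable_const
    have hAeq : A n = T ⁻¹' D := by
      ext x
      simp only [hA, hD, Set.mem_setOf_eq, Set.mem_preimage]
      constructor
      · rintro ⟨h1, h2⟩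
        exact ⟨by rw [hσT n le_rfl x]; exact h1, fun m hm => by rw [hσT m hm.le x]; exact h2 m hm⟩
      · rintro ⟨h1, h2⟩
        rw [hσT n le_rfl x] at h1
        exact ⟨h1, fun m hm => by have := h2 m hm; rwa [hσT m hm.le x] at this⟩
    have hBeq : (W ⁻¹' E) = {x | |S N x - S n x| ≤ a} := by
      ext x
      simp only [hE, Set.mem_preimage, Set.mem_setOf_eq, hψW x]
    have hmul := hTW.measure_inter_preimage_eq_mul D E hDmeas hEmeas
    rw [← hAeq] at hmul
    -- P(W⁻¹E) ≥ 1/2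
    have hBhalf : 1 / 2 ≤ (P (W ⁻¹' E)).toReal := by
      have hcompl : (W ⁻¹' E)ᶜ ⊆ {x | a ≤ |∑ i ∈ Finset.Ico n N, Z i x|} := by
        intro x hx
        simp only [hBeq, Set.mem_compl_iff, Set.mem_setOf_eq, not_le] at hx
        rw [Set.mem_setOf_eq, hsplit n hn x]
        exact hx.le
      have h1 : (P (W ⁻¹' E)ᶜ).toReal ≤ 1 / 2 :=
        le_trans (ENNReal.toReal_mono (measure_ne_top _ _) (measure_mono hcompl)) (hsmall n hn)
      have hWmeas : Measurable W := measurable_pi_lambda _ (fun i => hmeas i)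
      have hadd : P (W ⁻¹' E) + P ((W ⁻¹' E)ᶜ) = 1 := by
        rw [measure_add_measure_compl (hEmeas.preimage hWmeas), measure_univ]
      have hadd' : (P (W ⁻¹' E)).toReal + (P ((W ⁻¹' E)ᶜ)).toReal = 1 := by
        rw [← ENNReal.toReal_add (measure_ne_top _ _) (measure_ne_top _ _), hadd,
          ENNReal.toReal_one]
      linarith
    have hmul' : (P (A n ∩ W ⁻¹' E)).toReal = (P (A n)).toReal * (P (W ⁻¹' E)).toReal := by
      rw [hmul, ENNReal.toReal_mul]
    have hsubset : A n ∩ W ⁻¹' E ⊆ A n ∩ {x | a ≤ |S N x|} := by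
      rintro x ⟨hxA, hxB⟩
      refine ⟨hxA, ?_⟩
      rw [hBeq] at hxB
      simp only [Set.mem_setOf_eq] at hxB ⊢
      have h1 : 2 * a ≤ |S n x| := hxA.1
      have h2 : |S n x| - |S N x - S n x| ≤ |S N x| := by
        have h3 := abs_sub_abs_le_abs_sub (S n x) (S N x)
        rw [abs_sub_comm] at h3
        linarith
      linarith
    have hmono : (P (A n ∩ W ⁻¹' E)).toReal ≤ (P (A n ∩ {x | a ≤ |S N x|})).toReal :=
      ENNReal.toReal_mono (measure_ne_top _ _) (measure_mono hsubset)
    have hq := mul_le_mul_of_nonneg_left hBhalf (ENNReal.toReal_nonneg (a := P (A n)))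
    linarith
  -- final assembly
  show (P {x | ∃ n ≤ N, 2 * a ≤ |S n x|}).toReal ≤ 2 * (P {x | a ≤ |S N x|}).toReal
  rw [hcover]
  have htgtmeas : MeasurableSet {x | a ≤ |S N x|} :=
    measurableSet_le measurable_const (hSmeas N).abs
  have hUnion : (P (⋃ n ∈ Finset.range (N + 1), A n)).toReal
      = ∑ n ∈ Finset.range (N + 1), (P (A n)).toReal := by
    rw [measure_biUnion_finset hdisj (fun n _ => hAmeas n),
      ENNReal.toReal_sum (fun n _ => measure_ne_top _ _)]
  rw [hUnion]
  have hdisj2 : (↑(Finset.range (N + 1)) : Set ℕ).PairwiseDisjoint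
      (fun n => A n ∩ {x | a ≤ |S N x|}) := fun m hm n hn hmn =>
    Disjoint.mono Set.inter_subset_left Set.inter_subset_left (hdisj hm hn hmn)
  have hU2 : ∑ n ∈ Finset.range (N + 1), (P (A n ∩ {x | a ≤ |S N x|})).toReal
      = (P (⋃ n ∈ Finset.range (N + 1), (A n ∩ {x | a ≤ |S N x|}))).toReal := by
    rw [measure_biUnion_finset hdisj2 (fun n _ => (hAmeas n).inter htgtmeas),
      ENNReal.toReal_sum (fun n _ => measure_ne_top _ _)]
  calc ∑ n ∈ Finset.range (N + 1), (P (A n)).toReal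
      ≤ ∑ n ∈ Finset.range (N + 1), 2 * (P (A n ∩ {x | a ≤ |S N x|})).toReal :=
        Finset.sum_le_sum (fun n hn =>
          hkey n (by rw [Finset.mem_range] at hn; omega))
    _ = 2 * ∑ n ∈ Finset.range (N + 1), (P (A n ∩ {x | a ≤ |S N x|})).toReal := by
        rw [Finset.mul_sum]
    _ = 2 * (P (⋃ n ∈ Finset.range (N + 1), (A n ∩ {x | a ≤ |S N x|}))).toReal := by
        rw [hU2]
    _ ≤ 2 * (P {x | a ≤ |S N x|}).toReal := by
        apply mul_le_mul_of_nonneg_left _ (by norm_num : (0:ℝ) ≤ 2)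
        apply ENNReal.toReal_mono (measure_ne_top _ _)
        apply measure_mono
        exact Set.iUnion₂_subset fun n _ => Set.inter_subset_right


lemma fluct {Z : ℕ → Ω → ℝ} (hind : iIndepFun Z P)
    (hmeas : ∀ i, Measurable (Z i)) (hbd : ∀ i x, |Z i x| ≤ 1)
    (hmgf : ∀ i t, mgf (Z i) P t ≤ exp (t ^ 2)) {ε : ℝ} (hε : 0 < ε) :
    ∀ᵐ x ∂P, ∀ᶠ R : ℕ in atTop,
      (∑ i ∈ Finset.range R, Z i x) ^ 2 ≤ ε * (R * Real.log R) := by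
  classical
  have hlog2 : (0:ℝ) < Real.log 2 := Real.log_pos (by norm_num)
  set ε' : ℝ := ε * Real.log 2 / 16 with hε'
  have hε'pos : 0 < ε' := by positivity
  set a : ℕ → ℝ := fun m => Real.sqrt (ε' * (2 ^ m * (m + 1))) with haf
  have hapos : ∀ m, 0 < a m := by
    intro m; apply Real.sqrt_pos.mpr; positivity
  have hasq : ∀ m, a m ^ 2 = ε' * (2 ^ m * (m + 1)) := by
    intro m; rw [Real.sq_sqrt]; positivity
  set E : ℕ → Set Ω :=
    fun m => {x | ∃ n ≤ 2 ^ (m + 1), 2 * a m ≤ |∑ i ∈ Finset.range n, Z i x|} with hE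
  set q : ℕ → ℝ := fun m => exp (-ε' * (m + 1) / 8) with hq
  have hqpos : ∀ m, 0 < q m := fun m => exp_pos _
  -- tail bound for each m
  have hEbound : ∀ m, (P (E m)).toReal ≤ 4 * q m := by
    intro m
    set N : ℕ := 2 ^ (m + 1) with hN
    have hNpos : 0 < N := by positivity
    have hexp_le : ∀ c : ℕ, 0 < c → c ≤ N →
        exp (-(a m ^ 2) / (4 * c)) ≤ q m := by
      intro c hc hcN
      simp only [hq]
      rw [exp_le_exp, hasq]
      have h1 : (0:ℝ) < c := by exact_mod_cast hc
      have h2 : (c:ℝ) ≤ 2 * 2 ^ m := by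
        have : (c:ℝ) ≤ ((2:ℕ) ^ (m+1) : ℕ) := by exact_mod_cast hcN
        calc (c:ℝ) ≤ ((2:ℕ) ^ (m+1) : ℕ) := this
          _ = 2 * 2 ^ m := by push_cast; ring
      have key : ε' * ((m:ℝ) + 1) / 8 ≤ ε' * (2 ^ m * ((m:ℝ) + 1)) / (4 * c) := by
        rw [div_le_div_iff₀ (by norm_num) (by positivity)]
        have hint := mul_le_mul_of_nonneg_left h2
          (show (0:ℝ) ≤ ε' * ((m:ℝ) + 1) * 4 by positivity)
        nlinarith [hint]
      calc -(ε' * (2 ^ m * ((m:ℝ) + 1))) / (4 * c) = -(ε' * (2 ^ m * ((m:ℝ) + 1)) / (4 * c)) := by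
            ring
        _ ≤ -(ε' * ((m:ℝ) + 1) / 8) := neg_le_neg key
        _ = -ε' * ((m:ℝ) + 1) / 8 := by ring
    rcases lt_or_ge (4 * q m) 1 with hcase | hcase
    · -- ottaviani applies
      have hsmall : ∀ n ≤ N, (P {x | a m ≤ |∑ i ∈ Finset.Ico n N, Z i x|}).toReal ≤ 1 / 2 := by
        intro n hn
        by_cases hnN : n = N
        · have hempty : {x | a m ≤ |∑ i ∈ Finset.Ico n N, Z i x|} = ∅ := by
            rw [hnN, Finset.Ico_self]
            ext y
            simp only [Finset.sum_empty, abs_zero, Set.mem_setOf_eq, Set.mem_empty_iff_false,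
              iff_false, not_le]
            exact hapos m
          rw [hempty]
          simp
        · have hlt : n < N := lt_of_le_of_ne hn hnN
          have hcard : (Finset.Ico n N).card = N - n := Nat.card_Ico n N
          have hch := chernoff_abs P hind hmeas hbd hmgf (Finset.Ico n N) (hapos m)
          rw [hcard] at hch
          have := hexp_le (N - n) (by omega) (by omega)
          calc (P {x | a m ≤ |∑ i ∈ Finset.Ico n N, Z i x|}).toReal
              ≤ 2 * exp (-(a m ^ 2) / (4 * (N - n : ℕ))) := hch
            _ ≤ 2 * q m := by linarith
            _ ≤ 1 / 2 := by linarith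
      have hott := ottaviani P hind hmeas N (hapos m) hsmall
      have hch := chernoff_abs P hind hmeas hbd hmgf (Finset.range N) (hapos m)
      rw [Finset.card_range] at hch
      have hee := hexp_le N hNpos le_rfl
      calc (P (E m)).toReal ≤ 2 * (P {x | a m ≤ |∑ i ∈ Finset.range N, Z i x|}).toReal := hott
        _ ≤ 2 * (2 * exp (-(a m ^ 2) / (4 * N))) := by linarith
        _ ≤ 4 * q m := by linarith
    · calc (P (E m)).toReal ≤ (P Set.univ).toReal :=
            ENNReal.toReal_mono (measure_ne_top _ _) (measure_mono (Set.subset_univ _))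
        _ = 1 := by simp
        _ ≤ 4 * q m := hcase
  -- Borel–Cantelli
  have hBC : ∀ᵐ x ∂P, ∀ᶠ m in atTop, x ∉ E m := by
    apply ae_eventually_notMem
    have hle : ∀ m, P (E m) ≤ ENNReal.ofReal (4 * q m) := by
      intro m
      rw [ENNReal.le_ofReal_iff_toReal_le (measure_ne_top _ _)
        (by positivity)]
      exact hEbound m
    have hsummable : Summable (fun m : ℕ => 4 * q m) := by
      have heq : (fun m : ℕ => 4 * q m)
          = fun m : ℕ => (4 * exp (-ε' / 8)) * (exp (-ε' / 8)) ^ m := by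
        funext m
        have hqm : q m = exp (-ε' / 8) ^ (m + 1) := by
          simp only [hq]
          rw [← Real.exp_nat_mul]
          congr 1
          push_cast
          ring
        rw [hqm, pow_succ]
        ring
      rw [heq]
      exact (summable_geometric_of_lt_one (exp_pos _).le
        (exp_lt_one_iff.mpr (by linarith [hε'pos]))).mul_left _
    have hfin : ∑' m, ENNReal.ofReal (4 * q m) ≠ ⊤ := by
      rw [← ENNReal.ofReal_tsum_of_nonneg (fun m => by positivity) hsummable]
      exact ENNReal.ofReal_ne_top
    exact ne_top_of_le_ne_top hfin (ENNReal.tsum_le_tsum hle)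
  -- pointwise conversion
  filter_upwards [hBC] with x hx
  obtain ⟨m₀, hm₀⟩ := eventually_atTop.mp hx
  rw [eventually_atTop]
  refine ⟨max 2 (2 ^ (m₀ + 1)), fun R hR => ?_⟩
  have hR2 : 2 ≤ R := le_trans (le_max_left _ _) hR
  have hRm : 2 ^ (m₀ + 1) ≤ R := le_trans (le_max_right _ _) hR
  set m : ℕ := Nat.log 2 R with hm
  have hm1 : 2 ^ m ≤ R := Nat.pow_log_le_self 2 (by omega)
  have hm2 : R < 2 ^ (m + 1) := Nat.lt_pow_succ_log_self (by norm_num) R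
  have hmge : 1 ≤ m := by
    rw [hm, Nat.le_log_iff_pow_le (by norm_num) (by omega)]
    simpa using hR2
  have hmm₀ : m₀ ≤ m := by
    have : 2 ^ (m₀ + 1) < 2 ^ (m + 1) := lt_of_le_of_lt hRm hm2
    have := Nat.pow_lt_pow_iff_right (a := 2) (by norm_num) |>.mp this
    omega
  have hnotE := hm₀ m hmm₀
  rw [hE, Set.mem_setOf_eq] at hnotE
  push_neg at hnotE
  have habs : |∑ i ∈ Finset.range R, Z i x| < 2 * a m := hnotE R (le_of_lt hm2)
  have hsq : (∑ i ∈ Finset.range R, Z i x) ^ 2 < (2 * a m) ^ 2 := by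
    rw [← sq_abs]
    apply pow_lt_pow_left₀ habs (abs_nonneg _) (by norm_num)
  have hfin : (2 * a m) ^ 2 ≤ ε * (R * Real.log R) := by
    rw [mul_pow, hasq]
    have hc1 : ((2:ℝ) ^ m) ≤ R := by exact_mod_cast hm1
    have hc2 : (m : ℝ) * Real.log 2 ≤ Real.log R := by
      rw [← Real.log_pow]
      apply Real.log_le_log (by positivity)
      exact_mod_cast hm1
    have hc3 : (1:ℝ) ≤ m := by exact_mod_cast hmge
    have hlogR : 0 ≤ Real.log R := Real.log_nonneg (by
      have : (2:ℝ) ≤ R := by exact_mod_cast hR2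
      linarith)
    have hstep : (2:ℝ) ^ 2 * (ε' * (2 ^ m * (m + 1))) ≤ ε * (2 ^ m * (Real.log 2 * m)) := by
      have hint := mul_le_mul_of_nonneg_left (show (m:ℝ) + 1 ≤ 4 * m by linarith)
        (show (0:ℝ) ≤ ε * Real.log 2 * 2 ^ m / 4 by positivity)
      simp only [hε']
      nlinarith [hint]
    calc (2:ℝ) ^ 2 * (ε' * (2 ^ m * (m + 1))) ≤ ε * (2 ^ m * (Real.log 2 * m)) := hstep
      _ ≤ ε * (R * Real.log R) := by
          apply mul_le_mul_of_nonneg_left _ hε.le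
          apply mul_le_mul hc1 (by nlinarith) (by positivity) (by positivity)
  linarith

end Prob

end ULRAux

open ULRAux in
/-- The asymptotic uncertain likelihood ratio
`Λ̃(R) = [(R+K−1)!/((K−1)! ∏ₖ r^{(R)}ₖ!)] ∏ₖ (π*ₖ)^{r^{(R)}ₖ}`, where `r^{(R)}` are the
category counts of `R` i.i.d. training samples drawn from `π_θ`:
as `R → ∞` it diverges to `+∞` a.s. if `π_θ = π*`, and tends to `0` a.s. if `π_θ ≠ π*`. -/
theorem asymptoticULR_dichotomy
    {Ω : Type*} [MeasurableSpace Ω] (P : Measure Ω) [IsProbabilityMeasure P]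
    (K : ℕ) (hK : 2 ≤ K)
    (πstar πθ : Fin K → ℝ)
    (hstar_pos : ∀ k, 0 < πstar k) (hstar_sum : ∑ k, πstar k = 1)
    (hθ_pos : ∀ k, 0 < πθ k) (hθ_sum : ∑ k, πθ k = 1)
    (X : ℕ → Ω → Fin K) (hX_meas : ∀ n, Measurable (X n))
    (hX_indep : iIndepFun X P)
    (hX_law : ∀ n k, P {x | X n x = k} = ENNReal.ofReal (πθ k)) :
    (πθ = πstar →
      ∀ᵐ x ∂P, Tendsto
        (fun R =>
          (((R + K - 1).factorial : ℕ) : ℝ) /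
              ((((K - 1).factorial : ℕ) : ℝ) *
                ∏ k, (((sigCount X k R x).factorial : ℕ) : ℝ)) *
            ∏ k, πstar k ^ sigCount X k R x)
        atTop atTop) ∧
    (πθ ≠ πstar →
      ∀ᵐ x ∂P, Tendsto
        (fun R =>
          (((R + K - 1).factorial : ℕ) : ℝ) /
              ((((K - 1).factorial : ℕ) : ℝ) *
                ∏ k, (((sigCount X k R x).factorial : ℕ) : ℝ)) *
            ∏ k, πstar k ^ sigCount X k R x)
        atTop (nhds 0)) := by
  classical
  -- the centered indicator process for each category k
  set Y : Fin K → ℕ → Ω → ℝ :=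
    fun k i x => (if X i x = k then (1 : ℝ) else 0) - πθ k with hY
  have hYmeas : ∀ k i, Measurable (Y k i) := by
    intro k i
    apply Measurable.sub _ measurable_const
    exact Measurable.ite ((hX_meas i) (measurableSet_singleton k)) measurable_const
      measurable_const
  have hYind : ∀ k, iIndepFun (Y k) P := by
    intro k
    exact hX_indep.comp (fun i => fun v => (if v = k then (1 : ℝ) else 0) - πθ k)
      (fun i => measurable_from_top)
  have hYbd : ∀ k i x, |Y k i x| ≤ 1 := by
    intro k i x
    have h1 := (hθ_pos k).le
    have h2 : πθ k ≤ 1 := by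
      calc πθ k ≤ ∑ j, πθ j := Finset.single_le_sum (fun j _ => (hθ_pos j).le) (mem_univ k)
      _ = 1 := hθ_sum
    simp only [hY]
    split <;> rw [abs_le] <;> constructor <;> linarith
  -- integral helper
  have hint : ∀ (i : ℕ) (k : Fin K) (c₁ c₂ : ℝ),
      ∫ x, (if X i x = k then c₁ else c₂) ∂P = c₁ * πθ k + c₂ * (1 - πθ k) := by
    intro i k c₁ c₂
    have hA : MeasurableSet {x | X i x = k} := (hX_meas i) (measurableSet_singleton k)
    have hfun : (fun x => if X i x = k then c₁ else c₂)
        = fun x => Set.indicator {x | X i x = k} (fun _ => c₁ - c₂) x + c₂ := by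
      funext x
      by_cases h : X i x = k
      · rw [Set.indicator_of_mem (by exact h : x ∈ {x | X i x = k})]
        simp [h]
      · rw [Set.indicator_of_notMem (by exact h : x ∉ {x | X i x = k})]
        simp [h]
    rw [hfun, integral_add ((integrable_const (c₁ - c₂)).indicator hA) (integrable_const c₂),
      integral_indicator_const _ hA, integral_const]
    have hPA : (P {x | X i x = k}).toReal = πθ k := by
      rw [hX_law i k, ENNReal.toReal_ofReal (hθ_pos k).le]
    simp only [measureReal_def, hPA, measure_univ, ENNReal.toReal_one, smul_eq_mul, one_mul]
    ring
  have hYmgf : ∀ k i t, mgf (Y k i) P t ≤ Real.exp (t ^ 2) := by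
    intro k i t
    have h2 : πθ k ≤ 1 := by
      calc πθ k ≤ ∑ j, πθ j := Finset.single_le_sum (fun j _ => (hθ_pos j).le) (mem_univ k)
      _ = 1 := hθ_sum
    have : mgf (Y k i) P t
        = πθ k * Real.exp (t * (1 - πθ k)) + (1 - πθ k) * Real.exp (-(t * πθ k)) := by
      rw [mgf]
      have : ∀ x, Real.exp (t * Y k i x)
          = if X i x = k then Real.exp (t * (1 - πθ k)) else Real.exp (-(t * πθ k)) := by
        intro x; simp only [hY]; split <;> ring_nf
      rw [show (fun x => Real.exp (t * Y k i x))
          = fun x => if X i x = k then Real.exp (t * (1 - πθ k)) else Real.exp (-(t * πθ k)) from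
          funext this, hint i k _ _]
      ring
    rw [this]
    exact bernoulli_mgf_bound (hθ_pos k).le h2 t
  -- sums of Y are the centered counts
  have hYsum : ∀ k (R : ℕ) x, ∑ i ∈ Finset.range R, Y k i x
      = (sigCount X k R x : ℝ) - R * πθ k := by
    intro k R x
    simp only [hY, Finset.sum_sub_distrib, Finset.sum_const, Finset.card_range, nsmul_eq_mul]
    congr 1
    rw [show sigCount X k R x = ((Finset.range R).filter (fun τ => X τ x = k)).card from rfl, Finset.card_filter]
    push_cast
    rfl
  -- fluctuation bounds
  have hflk : ∀ (k : Fin K) (ε : ℝ), 0 < ε → ∀ᵐ x ∂P, ∀ᶠ R : ℕ in atTop,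
      ((sigCount X k R x : ℝ) - R * πθ k) ^ 2 ≤ ε * (R * Real.log R) := by
    intro k ε hε
    filter_upwards [fluct P (hYind k) (hYmeas k) (hYbd k) (hYmgf k) hε] with x hx
    simpa only [hYsum k] using hx
  -- ratio convergence
  have hconv : ∀ᵐ x ∂P, ∀ k, Tendsto (fun R : ℕ => (sigCount X k R x : ℝ) / R)
      atTop (nhds (πθ k)) := by
    rw [ae_all_iff]
    intro k
    have hlogdiv : Tendsto (fun R : ℕ => Real.sqrt (Real.log R / R)) atTop (nhds 0) := by
      have h1 : Tendsto (fun x : ℝ => Real.log x / x) atTop (nhds 0) := by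
        simpa using Real.isLittleO_log_id_atTop.tendsto_div_nhds_zero
      have h2 : Tendsto (fun R : ℕ => Real.log R / R) atTop (nhds 0) :=
        h1.comp tendsto_natCast_atTop_atTop
      have h3 := (Real.continuous_sqrt.tendsto' 0 0 Real.sqrt_zero).comp h2
      exact h3
    filter_upwards [hflk k 1 one_pos] with x hx
    have hzero : Tendsto (fun R : ℕ => (sigCount X k R x : ℝ) / R - πθ k) atTop (nhds 0) := by
      apply squeeze_zero_norm' _ hlogdiv
      filter_upwards [hx, eventually_ge_atTop 1] with R h1 hR1
      have hR0 : (0:ℝ) < R := by exact_mod_cast hR1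
      have hsq : ((sigCount X k R x : ℝ) / R - πθ k) ^ 2 ≤ Real.log R / R := by
        have he : (sigCount X k R x : ℝ) / R - πθ k
            = ((sigCount X k R x : ℝ) - R * πθ k) / R := by
          field_simp
        rw [he, div_pow]
        rw [div_le_div_iff₀ (by positivity) hR0]
        rw [one_mul] at h1
        calc ((sigCount X k R x : ℝ) - R * πθ k) ^ 2 * R ≤ ((R:ℝ) * Real.log R) * R := by
              apply mul_le_mul_of_nonneg_right h1 hR0.le
          _ = Real.log R * (R:ℝ) ^ 2 := by ring
      calc ‖(sigCount X k R x : ℝ) / R - πθ k‖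
          = |(sigCount X k R x : ℝ) / R - πθ k| := rfl
        _ ≤ Real.sqrt (Real.log R / R) := Real.abs_le_sqrt hsq
    have := hzero.add_const (πθ k)
    simpa using this
  have hsum : ∀ x (R : ℕ), ∑ k, sigCount X k R x = R := by
    intro x R
    simp only [sigCount]
    rw [← Finset.card_eq_sum_card_fiberwise (f := fun τ => X τ x)
      (t := Finset.univ) (fun τ _ => mem_univ _), Finset.card_range]
  constructor
  · -- case πθ = πstar
    intro heq
    subst heq
    have hfl := ae_all_iff.2 (fun k : Fin K => hflk k (πθ k * (K - 1) / (8 * K))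
      (by
        have h1 : (0:ℝ) < (K:ℝ) - 1 := by
          have : (2:ℝ) ≤ (K:ℝ) := by exact_mod_cast hK
          linarith
        have h2 := hθ_pos k
        have h3 : (0:ℝ) < (K:ℝ) := by positivity
        positivity))
    filter_upwards [hfl, hconv] with x hx hcx
    exact caseOne_det hK πθ hθ_pos hθ_sum (fun R k => sigCount X k R x) (hsum x)
      (fun k => hcx k) (fun k => hx k)
  · intro hne
    filter_upwards [hconv] with x hcx
    exact caseTwo_det hK πstar πθ hstar_pos hstar_sum hθ_pos hθ_sum hne
      (fun R k => sigCount X k R x) (hsum x) (fun k => hcx k)
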